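/- Let L ≥ 2 be an integer and let F : ℝ₊^N → ℝ be defined by F(x) = ½ Σₙ (xₙ log xₙ − xₙ) if L = 2 (with the convention 0·log 0 = 0) and F(x) = (L/(2(2−L))) Σₙ xₙ^{2/L} if L > 2. Fix z ∈ ℝ^N with z ≥ 0, and let x : [0,∞) → ℝ^N be a continuous function with x(t) ≥ 0 for all t, x(0) entrywise strictly positive, and ‖x(t)‖₂ → ∞ as t → ∞. Then D_F(z, x(t)) → ∞ as t → ∞, where D_F(p,q) = F(p) − F(q) − ⟨∇F(q), p − q⟩ with ∇F(q)ₙ = ½ log qₙ if L = 2 and ∇F(q)ₙ = qₙ^{(2−L)/L}/(2−L) if L > 2. -/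

import Mathlib

open Filter Topology Matrix

noncomputable section

/-- The Bregman potential `F`: for `L = 2`, `F(x) = ½ Σₙ (xₙ log xₙ − xₙ)` (with `0·log 0 = 0`,
which holds automatically since `Real.log 0 = 0`); for `L > 2`,
`F(x) = (L/(2(2−L))) Σₙ xₙ^{2/L}`. -/
def bregF {N : ℕ} (L : ℕ) (x : Fin N → ℝ) : ℝ :=
  if L = 2 then (1 / 2) * ∑ n, (x n * Real.log (x n) - x n)
  else ((L : ℝ) / (2 * (2 - (L : ℝ)))) * ∑ n, x n ^ ((2 : ℝ) / (L : ℝ))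

/-- The gradient of `F` on the positive orthant:
`∇F(q)ₙ = ½ log qₙ` if `L = 2` and `∇F(q)ₙ = qₙ^{(2−L)/L}/(2−L)` if `L > 2`. -/
def bregGradF {N : ℕ} (L : ℕ) (q : Fin N → ℝ) : Fin N → ℝ :=
  fun n => if L = 2 then (1 / 2) * Real.log (q n)
  else q n ^ (((2 : ℝ) - (L : ℝ)) / (L : ℝ)) / (2 - (L : ℝ))

/-- The Bregman divergence `D_F(p,q) = F(p) − F(q) − ⟨∇F(q), p − q⟩`. -/
def bregD {N : ℕ} (L : ℕ) (p q : Fin N → ℝ) : ℝ :=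
  bregF L p - bregF L q - ∑ n, bregGradF L q n * (p n - q n)

lemma my_rpow_add_le {p : ℝ} (hp0 : 0 ≤ p) (hp1 : p ≤ 1) (a b : ℝ) (ha : 0 ≤ a) (hb : 0 ≤ b) :
    (a + b) ^ p ≤ a ^ p + b ^ p := by
  lift a to NNReal using ha
  lift b to NNReal using hb
  rw [← NNReal.coe_add, ← NNReal.coe_rpow, ← NNReal.coe_rpow, ← NNReal.coe_rpow,
    ← NNReal.coe_add, NNReal.coe_le_coe]
  exact NNReal.rpow_add_le_add_rpow a b hp0 hp1

lemma my_sum_rpow {N : ℕ} {p : ℝ} (hp0 : 0 < p) (hp1 : p ≤ 1) (f : Fin N → ℝ)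
    (hf : ∀ i, 0 ≤ f i) : (∑ i, f i) ^ p ≤ ∑ i, f i ^ p := by
  classical
  have H : ∀ s : Finset (Fin N), (∑ i ∈ s, f i) ^ p ≤ ∑ i ∈ s, f i ^ p := by
    intro s
    induction s using Finset.cons_induction with
    | empty => simp [Real.zero_rpow hp0.ne']
    | cons a s ha ih =>
      rw [Finset.sum_cons, Finset.sum_cons]
      calc (f a + ∑ i ∈ s, f i) ^ p ≤ f a ^ p + (∑ i ∈ s, f i) ^ p :=
            my_rpow_add_le hp0.le hp1 _ _ (hf a) (Finset.sum_nonneg fun i _ => hf i)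
        _ ≤ f a ^ p + ∑ i ∈ s, f i ^ p := by linarith
  exact H Finset.univ

lemma log_bound (z q : ℝ) (hz : 0 ≤ z) (hq : 0 ≤ q) :
    z * Real.log q ≤ q / 2 + max (z * (Real.log (2 * z) - 1)) 0 := by
  rcases eq_or_lt_of_le hz with hz0 | hz0
  · simp only [← hz0, zero_mul, max_self]
    positivity
  rcases eq_or_lt_of_le hq with hq0 | hq0
  · simp only [← hq0, Real.log_zero, mul_zero]
    have : (0:ℝ) ≤ max (z * (Real.log (2 * z) - 1)) 0 := le_max_right _ _
    linarith
  have h2z : 0 < 2 * z := by linarith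
  have hlog : Real.log (q / (2 * z)) ≤ q / (2 * z) - 1 :=
    Real.log_le_sub_one_of_pos (by positivity)
  have hsplit : Real.log q = Real.log (q / (2 * z)) + Real.log (2 * z) := by
    rw [← Real.log_mul (by positivity) h2z.ne']
    congr 1
    field_simp
  have h1 : z * Real.log q ≤ z * (q / (2 * z) - 1 + Real.log (2 * z)) := by
    rw [hsplit]
    have := mul_le_mul_of_nonneg_left hlog hz
    nlinarith
  have heq : z * (q / (2 * z) - 1 + Real.log (2 * z)) = q / 2 + z * (Real.log (2 * z) - 1) := by
    field_simp
    ring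
  have h2 : z * (Real.log (2 * z) - 1) ≤ max (z * (Real.log (2 * z) - 1)) 0 := le_max_left _ _
  linarith [heq ▸ h1]

theorem stmt11 {N : ℕ} (L : ℕ) (hL : 2 ≤ L)
    (z : Fin N → ℝ) (hz : ∀ i, 0 ≤ z i)
    (x : ℝ → Fin N → ℝ)
    (hcont : ContinuousOn x (Set.Ici 0))
    (hnonneg : ∀ t : ℝ, 0 ≤ t → ∀ i, 0 ≤ x t i)
    (hpos0 : ∀ i, 0 < x 0 i)
    (hblow : Tendsto (fun t => Real.sqrt (∑ i, x t i ^ 2)) atTop atTop) :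
    Tendsto (fun t => bregD L z (x t)) atTop atTop := by
  have hsum : Tendsto (fun t => ∑ i, x t i) atTop atTop := by
    apply tendsto_atTop_mono' _ _ hblow
    filter_upwards [eventually_ge_atTop (0 : ℝ)] with t ht
    have h1 : Real.sqrt (∑ i, x t i ^ 2) ≤ Real.sqrt ((∑ i, x t i) ^ 2) :=
      Real.sqrt_le_sqrt (Finset.sum_sq_le_sq_sum_of_nonneg fun i _ => hnonneg t ht i)
    rwa [Real.sqrt_sq (Finset.sum_nonneg fun i _ => hnonneg t ht i)] at h1
  rcases eq_or_lt_of_le hL with hL2 | hLgt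
  · -- L = 2
    subst hL2
    set C : ℝ := ∑ i, max (z i * (Real.log (2 * z i) - 1)) 0 with hC
    have key : ∀ t : ℝ, 0 ≤ t →
        bregF 2 z + ∑ i, ((1/4) * x t i - (1/2) * max (z i * (Real.log (2 * z i) - 1)) 0)
          ≤ bregD 2 z (x t) := by
      intro t ht
      have hF : bregF 2 (x t) = (1/2) * ∑ n, (x t n * Real.log (x t n) - x t n) := by
        rw [bregF]; simp
      have hG : ∀ n, bregGradF 2 (x t) n = (1/2) * Real.log (x t n) := by
        intro n; rw [bregGradF]; simp
      rw [bregD, hF]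
      simp only [hG]
      have hmain : ∑ i, ((1/4) * x t i - (1/2) * max (z i * (Real.log (2 * z i) - 1)) 0)
          ≤ -((1/2) * ∑ n, (x t n * Real.log (x t n) - x t n))
            - ∑ n, (1/2) * Real.log (x t n) * (z n - x t n) := by
        rw [Finset.mul_sum, ← Finset.sum_neg_distrib, ← Finset.sum_sub_distrib]
        apply Finset.sum_le_sum
        intro i _
        have hlb := log_bound (z i) (x t i) (hz i) (hnonneg t ht i)
        have hid : -((1/2) * (x t i * Real.log (x t i) - x t i))
            - (1/2) * Real.log (x t i) * (z i - x t i)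
            = (1/2) * x t i - (1/2) * (z i * Real.log (x t i)) := by ring
        rw [hid]
        linarith
      linarith
    apply tendsto_atTop_mono' _ ?_ ?_
    · exact fun t => bregF 2 z + ∑ i, ((1/4) * x t i
        - (1/2) * max (z i * (Real.log (2 * z i) - 1)) 0)
    · filter_upwards [eventually_ge_atTop (0 : ℝ)] with t ht using key t ht
    · apply tendsto_atTop_add_const_left
      have hrw : ∀ t : ℝ, ∑ i, ((1/4) * x t i - (1/2) * max (z i * (Real.log (2 * z i) - 1)) 0)
          = (1/4) * (∑ i, x t i) - (1/2) * C := by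
        intro t
        rw [hC, Finset.mul_sum, Finset.mul_sum, Finset.sum_sub_distrib]
      simp only [hrw]
      exact tendsto_atTop_add_const_right _ _ (hsum.const_mul_atTop (by norm_num))
  · -- L > 2
    have hLne : L ≠ 2 := by omega
    have hLpos : (0 : ℝ) < L := by positivity
    have h2L : (2 : ℝ) - (L : ℝ) < 0 := by
      have : (2 : ℝ) < L := by exact_mod_cast hLgt
      linarith
    have hp0 : (0 : ℝ) < 2 / (L : ℝ) := by positivity
    have hp1 : (2 : ℝ) / (L : ℝ) ≤ 1 := by
      rw [div_le_one hLpos]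
      exact_mod_cast hL
    have hexp2 : ((2:ℝ) - (L:ℝ)) / (L:ℝ) ≠ 0 := div_ne_zero h2L.ne hLpos.ne'
    have key : ∀ t : ℝ, 0 ≤ t →
        bregF L z + (1/2) * (∑ i, x t i ^ ((2:ℝ)/(L:ℝ))) ≤ bregD L z (x t) := by
      intro t ht
      have hF : bregF L (x t) = ((L:ℝ) / (2 * (2 - (L:ℝ)))) * ∑ n, x t n ^ ((2:ℝ)/(L:ℝ)) := by
        rw [bregF, if_neg hLne]
      have hG : ∀ n, bregGradF L (x t) n
          = x t n ^ (((2:ℝ) - (L:ℝ)) / (L:ℝ)) / (2 - (L:ℝ)) := by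
        intro n; rw [bregGradF, if_neg hLne]
      rw [bregD, hF]
      simp only [hG]
      have hmain : (1/2) * (∑ i, x t i ^ ((2:ℝ)/(L:ℝ)))
          ≤ -(((L:ℝ) / (2 * (2 - (L:ℝ)))) * ∑ n, x t n ^ ((2:ℝ)/(L:ℝ)))
            - ∑ n, x t n ^ (((2:ℝ) - (L:ℝ)) / (L:ℝ)) / (2 - (L:ℝ)) * (z n - x t n) := by
        rw [Finset.mul_sum, Finset.mul_sum, ← Finset.sum_neg_distrib, ← Finset.sum_sub_distrib]
        apply Finset.sum_le_sum
        intro i _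
        have hnn := hnonneg t ht i
        obtain ⟨q, hq⟩ : ∃ q : ℝ, q = x t i := ⟨_, rfl⟩
        rw [← hq] at hnn ⊢
        rcases eq_or_lt_of_le hnn with h0 | h0
        · rw [← h0, Real.zero_rpow hp0.ne', Real.zero_rpow hexp2]
          simp
        · 
          have hbq : q ^ (((2:ℝ) - (L:ℝ)) / (L:ℝ)) * q = q ^ ((2:ℝ)/(L:ℝ)) := by
            rw [← Real.rpow_add_one h0.ne']
            congr 1
            field_simp
            ring
          have hb_nonneg : 0 ≤ q ^ (((2:ℝ) - (L:ℝ)) / (L:ℝ)) := Real.rpow_nonneg h0.le _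
          have hcoef : -((L:ℝ) / (2 * (2 - (L:ℝ))) * q ^ ((2:ℝ)/(L:ℝ)))
              + q ^ ((2:ℝ)/(L:ℝ)) / (2 - (L:ℝ)) = (1/2) * q ^ ((2:ℝ)/(L:ℝ)) := by
            have hne : (2:ℝ) - (L:ℝ) ≠ 0 := h2L.ne
            field_simp
            ring
          have hzq : 0 ≤ -(q ^ (((2:ℝ) - (L:ℝ)) / (L:ℝ)) / (2 - (L:ℝ)) * z i) := by
            rw [neg_nonneg]
            apply mul_nonpos_of_nonpos_of_nonneg _ (hz i)
            exact div_nonpos_of_nonneg_of_nonpos hb_nonneg h2L.le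
          have hexpand : -((L:ℝ) / (2 * (2 - (L:ℝ))) * q ^ ((2:ℝ)/(L:ℝ)))
              - q ^ (((2:ℝ) - (L:ℝ)) / (L:ℝ)) / (2 - (L:ℝ)) * (z i - q)
              = -((L:ℝ) / (2 * (2 - (L:ℝ))) * q ^ ((2:ℝ)/(L:ℝ)))
                + (q ^ (((2:ℝ) - (L:ℝ)) / (L:ℝ)) * q) / (2 - (L:ℝ))
                - q ^ (((2:ℝ) - (L:ℝ)) / (L:ℝ)) / (2 - (L:ℝ)) * z i := by ring
          rw [hexpand, hbq]
          linarith
      linarith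
    apply tendsto_atTop_mono' _ ?_ ?_
    · exact fun t => bregF L z + (1/2) * (∑ i, x t i) ^ ((2:ℝ)/(L:ℝ))
    · filter_upwards [eventually_ge_atTop (0 : ℝ)] with t ht
      have h1 : (∑ i, x t i) ^ ((2:ℝ)/(L:ℝ)) ≤ ∑ i, x t i ^ ((2:ℝ)/(L:ℝ)) :=
        my_sum_rpow hp0 hp1 _ (hnonneg t ht)
      have h2 := key t ht
      linarith
    · apply tendsto_atTop_add_const_left
      exact ((tendsto_rpow_atTop hp0).comp hsum).const_mul_atTop (by norm_num)
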